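/- Let C be a nonempty closed convex subset of a real Hilbert space H and let A : C → H be an α-inverse strongly monotone mapping (α > 0) such that the solution set Ω of VI(C, A) is nonempty. Let {λ_n} ⊂ [a, b] for some a, b with 0 < a ≤ b < 2α and {α_n} ⊂ [c, d] for some c, d with 0 < c ≤ d < 1. Given x₀ ∈ C, define y_n = α_n x_n + (1 − α_n) P_C(x_n − λ_n A x_n) and x_{n+1} = P_C(y_n − λ_n A y_n). Then {x_n} converges weakly to a point p ∈ Ω, and p = lim_{n→∞} P_Ω x_n (strong limit). -/

import Mathlib

open scoped RealInnerProductSpace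
open Filter Topology

section aux
variable {H : Type*} [NormedAddCommGroup H] [InnerProductSpace ℝ H]

lemma my_proj_char {C : Set H} (hCcv : Convex ℝ C) (PC : H → H)
    (hPC : ∀ u : H, PC u ∈ C ∧ ∀ w ∈ C, ‖u - PC u‖ ≤ ‖u - w‖) (u : H) :
    ∀ w ∈ C, ⟪u - PC u, w - PC u⟫ ≤ 0 := by
  have hm := (hPC u).1
  have h2 := (hPC u).2
  haveI : Nonempty C := ⟨⟨PC u, hm⟩⟩
  have hinf : ‖u - PC u‖ = ⨅ w : C, ‖u - w‖ := by
    refine le_antisymm (le_ciInf fun w => h2 w w.2) ?_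
    exact ciInf_le ⟨0, fun r ⟨w, hw⟩ => hw ▸ norm_nonneg _⟩ (⟨PC u, hm⟩ : C)
  exact (norm_eq_iInf_iff_real_inner_le_zero hCcv hm).1 hinf

lemma my_proj_unique {C : Set H} {u v₁ v₂ : H} (h₁ : v₁ ∈ C) (h₂ : v₂ ∈ C)
    (c₁ : ∀ w ∈ C, ⟪u - v₁, w - v₁⟫ ≤ 0) (c₂ : ∀ w ∈ C, ⟪u - v₂, w - v₂⟫ ≤ 0) :
    v₁ = v₂ := by
  have h := add_nonpos (c₁ v₂ h₂) (c₂ v₁ h₁)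
  have e : ⟪u - v₁, v₂ - v₁⟫ + ⟪u - v₂, v₁ - v₂⟫ = ⟪v₂ - v₁, v₂ - v₁⟫ := by
    have h1 : (v₁ : H) - v₂ = -(v₂ - v₁) := by abel
    rw [h1, inner_neg_right, ← sub_eq_add_neg, ← inner_sub_left]
    congr 1; abel
  rw [e] at h
  have := real_inner_self_nonpos.1 h
  have : v₂ = v₁ := by rwa [sub_eq_zero] at this
  exact this.symm

lemma my_proj_nonexp {C : Set H} (hCcv : Convex ℝ C) (PC : H → H)
    (hPC : ∀ u : H, PC u ∈ C ∧ ∀ w ∈ C, ‖u - PC u‖ ≤ ‖u - w‖) (u v : H) :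
    ‖PC u - PC v‖ ≤ ‖u - v‖ := by
  have h₁ := my_proj_char hCcv PC hPC u (PC v) (hPC v).1
  have h₂ := my_proj_char hCcv PC hPC v (PC u) (hPC u).1
  have key : ‖PC u - PC v‖ ^ 2 ≤ ⟪u - v, PC u - PC v⟫ := by
    have e : ⟪u - v, PC u - PC v⟫ - ‖PC u - PC v‖ ^ 2
        = -(⟪u - PC u, PC v - PC u⟫ + ⟪v - PC v, PC u - PC v⟫) := by
      rw [← real_inner_self_eq_norm_sq]
      simp only [inner_sub_left, inner_sub_right]
      ring
    nlinarith [add_nonpos h₁ h₂]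
  have hcs : ⟪u - v, PC u - PC v⟫ ≤ ‖u - v‖ * ‖PC u - PC v‖ := real_inner_le_norm _ _
  nlinarith [norm_nonneg (PC u - PC v), norm_nonneg (u - v)]

lemma my_combo (t : ℝ) (u v : H) :
    ‖t • u + (1 - t) • v‖ ^ 2 = t * ‖u‖ ^ 2 + (1 - t) * ‖v‖ ^ 2 - t * (1 - t) * ‖u - v‖ ^ 2 := by
  simp only [← real_inner_self_eq_norm_sq]
  simp only [inner_add_left, inner_add_right, inner_sub_left, inner_sub_right,
    real_inner_smul_left, real_inner_smul_right]
  rw [real_inner_comm v u]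
  ring

lemma my_norm_sub_sq (p q z : H) :
    ‖z - q‖ ^ 2 = ‖z - p‖ ^ 2 + 2 * ⟪z - p, p - q⟫ + ‖p - q‖ ^ 2 := by
  simp only [← real_inner_self_eq_norm_sq]
  have e : z - q = (z - p) + (p - q) := by abel
  rw [e, inner_add_left, inner_add_right, inner_add_right, real_inner_comm (p - q) (z - p)]
  ring

end aux

set_option maxHeartbeats 4000000 in
theorem stmt_1
    {H : Type*} [NormedAddCommGroup H] [InnerProductSpace ℝ H] [CompleteSpace H]
    (C : Set H) (hCne : C.Nonempty) (hCcl : IsClosed C) (hCcv : Convex ℝ C)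
    (PC : H → H) (hPC : ∀ u : H, PC u ∈ C ∧ ∀ w ∈ C, ‖u - PC u‖ ≤ ‖u - w‖)
    (α : ℝ) (hα : 0 < α) (A : H → H)
    (hA : ∀ x ∈ C, ∀ y ∈ C, ⟪A x - A y, x - y⟫ ≥ α * ‖A x - A y‖ ^ 2)
    (Ω : Set H)
    (hΩ : Ω = {x ∈ C | ∀ y ∈ C, ⟪A x, y - x⟫ ≥ 0})
    (hΩne : Ω.Nonempty)
    (a b c d : ℝ) (ha : 0 < a) (hab : a ≤ b) (hb : b < 2 * α)
    (hc : 0 < c) (hcd : c ≤ d) (hd : d < 1)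
    (lam : ℕ → ℝ) (hlam : ∀ n, lam n ∈ Set.Icc a b)
    (alp : ℕ → ℝ) (halp : ∀ n, alp n ∈ Set.Icc c d)
    (x y : ℕ → H) (hx0 : x 0 ∈ C)
    (hy : ∀ n, y n = alp n • x n + (1 - alp n) • PC (x n - lam n • A (x n)))
    (hx : ∀ n, x (n + 1) = PC (y n - lam n • A (y n)))
    (PΩ : H → H) (hPΩ : ∀ u : H, PΩ u ∈ Ω ∧ ∀ w ∈ Ω, ‖u - PΩ u‖ ≤ ‖u - w‖) :
    ∃ p ∈ Ω,
      (∀ u : H, Tendsto (fun n => ⟪x n, u⟫) atTop (𝓝 ⟪p, u⟫)) ∧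
      Tendsto (fun n => PΩ (x n)) atTop (𝓝 p) := by
  -- basic facts
  have hΩC : ∀ q ∈ Ω, q ∈ C := by intro q hq; rw [hΩ] at hq; exact hq.1
  have hΩvi : ∀ q ∈ Ω, ∀ w ∈ C, 0 ≤ ⟪A q, w - q⟫ := by
    intro q hq; rw [hΩ] at hq; exact hq.2
  have hlam0 : ∀ n, 0 < lam n := fun n => lt_of_lt_of_le ha (hlam n).1
  have hlam2 : ∀ n, lam n < 2 * α := fun n => lt_of_le_of_lt (hlam n).2 hb
  have hpcC : ∀ u, PC u ∈ C := fun u => (hPC u).1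
  have pchar := my_proj_char hCcv PC hPC
  -- the auxiliary sequence t n
  set t : ℕ → H := fun n => PC (x n - lam n • A (x n)) with ht
  -- memberships
  have hxC : ∀ n, x n ∈ C := by
    intro n; induction n with
    | zero => exact hx0
    | succ n ih => rw [hx n]; exact hpcC _
  have htC : ∀ n, t n ∈ C := fun n => hpcC _
  have hyC : ∀ n, y n ∈ C := by
    intro n; rw [hy n]
    have h1 := (halp n).1; have h2 := (halp n).2
    exact hCcv (hxC n) (htC n) (le_of_lt (lt_of_lt_of_le hc h1))
      (by linarith) (by ring)
  -- fixed point property of points in Ω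
  have hfix : ∀ q ∈ Ω, ∀ n, PC (q - lam n • A q) = q := by
    intro q hq n
    refine my_proj_unique (hpcC _) (hΩC q hq) (pchar _) ?_
    intro w hw
    have e : q - lam n • A q - q = -(lam n • A q) := by abel
    rw [e, inner_neg_left, real_inner_smul_left]
    have := hΩvi q hq w hw
    have := hlam0 n
    nlinarith
  -- contraction estimate
  have hcontr : ∀ z ∈ C, ∀ q ∈ Ω, ∀ n,
      ‖PC (z - lam n • A z) - q‖ ^ 2
        ≤ ‖z - q‖ ^ 2 - lam n * (2 * α - lam n) * ‖A z - A q‖ ^ 2 := by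
    intro z hz q hq n
    have hne := my_proj_nonexp hCcv PC hPC (z - lam n • A z) (q - lam n • A q)
    rw [hfix q hq n] at hne
    have hsq : ‖PC (z - lam n • A z) - q‖ ^ 2 ≤ ‖z - lam n • A z - (q - lam n • A q)‖ ^ 2 :=
      pow_le_pow_left₀ (norm_nonneg _) hne 2
    have e : z - lam n • A z - (q - lam n • A q) = (z - q) - lam n • (A z - A q) := by
      rw [smul_sub]; abel
    rw [e] at hsq
    have hexp : ‖(z - q) - lam n • (A z - A q)‖ ^ 2
        = ‖z - q‖ ^ 2 - 2 * lam n * ⟪A z - A q, z - q⟫ + (lam n) ^ 2 * ‖A z - A q‖ ^ 2 := by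
      simp only [← real_inner_self_eq_norm_sq]
      simp only [inner_sub_left, inner_sub_right, real_inner_smul_left, real_inner_smul_right]
      rw [real_inner_comm z (A z), real_inner_comm z (A q), real_inner_comm q (A z),
        real_inner_comm q (A q)]
      ring
    have hism := hA z hz q (hΩC q hq)
    have h1 := hlam0 n
    nlinarith [hsq, hexp]
  -- key inequality for y
  have hkey : ∀ q ∈ Ω, ∀ n,
      ‖y n - q‖ ^ 2 ≤ ‖x n - q‖ ^ 2
        - alp n * (1 - alp n) * ‖x n - t n‖ ^ 2
        - (1 - alp n) * (lam n * (2 * α - lam n)) * ‖A (x n) - A q‖ ^ 2 := by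
    intro q hq n
    have e : y n - q = alp n • (x n - q) + (1 - alp n) • (t n - q) := by
      rw [hy n]
      have efold : PC (x n - lam n • A (x n)) = t n := rfl
      rw [efold]; module
    have hcombo := my_combo (alp n) (x n - q) (t n - q)
    have e2 : (x n - q) - (t n - q) = x n - t n := by abel
    rw [e2] at hcombo
    have hct := hcontr (x n) (hxC n) q hq n
    have h1 := (halp n).1; have h2 := (halp n).2
    have hc1 : 0 < alp n := lt_of_lt_of_le hc h1
    have hc2 : alp n < 1 := lt_of_le_of_lt h2 hd
    rw [e, hcombo]
    nlinarith [hct]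
  -- step inequality
  have hstep : ∀ q ∈ Ω, ∀ n, ‖x (n + 1) - q‖ ^ 2 ≤ ‖y n - q‖ ^ 2 := by
    intro q hq n
    rw [hx n]
    have := hcontr (y n) (hyC n) q hq n
    have h1 := hlam0 n; have h2 := hlam2 n
    nlinarith [sq_nonneg (‖A (y n) - A q‖), mul_pos h1 (by linarith : (0:ℝ) < 2*α - lam n)]
  -- Fejér monotonicity
  have hmono : ∀ q ∈ Ω, ∀ n, ‖x (n + 1) - q‖ ≤ ‖x n - q‖ := by
    intro q hq n
    have h1 := hstep q hq n
    have h2 := hkey q hq n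
    have h1' := (halp n).1; have h2' := (halp n).2
    have hc1 : 0 < alp n := lt_of_lt_of_le hc h1'
    have hc2 : alp n < 1 := lt_of_le_of_lt h2' hd
    have hl1 := hlam0 n; have hl2 := hlam2 n
    have hsq : ‖x (n + 1) - q‖ ^ 2 ≤ ‖x n - q‖ ^ 2 := by
      have A1 : 0 ≤ alp n * (1 - alp n) * ‖x n - t n‖ ^ 2 :=
        mul_nonneg (mul_nonneg (le_of_lt hc1) (by linarith)) (sq_nonneg _)
      have A2 : 0 ≤ (1 - alp n) * (lam n * (2 * α - lam n)) * ‖A (x n) - A q‖ ^ 2 :=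
        mul_nonneg (mul_nonneg (by linarith)
          (le_of_lt (mul_pos hl1 (by linarith)))) (sq_nonneg _)
      linarith
    exact (pow_le_pow_iff_left₀ (norm_nonneg _) (norm_nonneg _) two_ne_zero).1 hsq
  -- general decrease
  have hdec : ∀ q ∈ Ω, ∀ {n m : ℕ}, n ≤ m → ‖x m - q‖ ≤ ‖x n - q‖ := by
    intro q hq n m hnm
    have hanti : Antitone fun k => ‖x k - q‖ := antitone_nat_of_succ_le fun k => hmono q hq k
    exact hanti hnm
  -- limits of ‖x n - q‖
  have hnormlim : ∀ q ∈ Ω, ∃ l, 0 ≤ l ∧ Tendsto (fun n => ‖x n - q‖) atTop (𝓝 l) := by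
    intro q hq
    have hanti : Antitone fun n => ‖x n - q‖ := antitone_nat_of_succ_le fun n => hmono q hq n
    exact ⟨_, le_ciInf fun n => norm_nonneg _,
      tendsto_atTop_ciInf hanti ⟨0, fun r ⟨n, hn⟩ => hn ▸ norm_nonneg _⟩⟩
  -- a reference point
  obtain ⟨q0, hq0⟩ := hΩne
  set M : ℝ := ‖x 0 - q0‖ + ‖q0‖ with hM
  have hxbd : ∀ n, ‖x n‖ ≤ M := by
    intro n
    have h1 : ‖x n‖ ≤ ‖x n - q0‖ + ‖q0‖ := by
      have : x n = (x n - q0) + q0 := by abel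
      calc ‖x n‖ = ‖(x n - q0) + q0‖ := by rw [← this]
        _ ≤ ‖x n - q0‖ + ‖q0‖ := norm_add_le _ _
    have h2 : ‖x n - q0‖ ≤ ‖x 0 - q0‖ := hdec q0 hq0 (Nat.zero_le n)
    linarith
  have hM0 : 0 ≤ M := le_trans (norm_nonneg _) (hxbd 0)
  have htle : ∀ n, ‖t n - q0‖ ≤ ‖x n - q0‖ := by
    intro n
    have h := hcontr (x n) (hxC n) q0 hq0 n
    have hl1 := hlam0 n; have hl2 := hlam2 n
    have hnn : 0 ≤ lam n * (2 * α - lam n) * ‖A (x n) - A q0‖ ^ 2 :=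
      mul_nonneg (le_of_lt (mul_pos hl1 (by linarith))) (sq_nonneg _)
    have hsq : ‖t n - q0‖ ^ 2 ≤ ‖x n - q0‖ ^ 2 := by
      have : ‖PC (x n - lam n • A (x n)) - q0‖ = ‖t n - q0‖ := rfl
      rw [this] at h; linarith
    exact (pow_le_pow_iff_left₀ (norm_nonneg _) (norm_nonneg _) two_ne_zero).1 hsq
  have htbd : ∀ n, ‖t n‖ ≤ M := by
    intro n
    have h1 : ‖t n‖ ≤ ‖t n - q0‖ + ‖q0‖ := by
      have : t n = (t n - q0) + q0 := by abel
      calc ‖t n‖ = ‖(t n - q0) + q0‖ := by rw [← this]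
        _ ≤ ‖t n - q0‖ + ‖q0‖ := norm_add_le _ _
    have h2 := le_trans (htle n) (hdec q0 hq0 (Nat.zero_le n))
    linarith
  -- the Lyapunov sequence and its limit
  obtain ⟨l0, hl00, hl0⟩ := hnormlim q0 hq0
  set D : ℕ → ℝ := fun n => ‖x n - q0‖ ^ 2 with hD
  have hDlim : Tendsto D atTop (𝓝 (l0 ^ 2)) := hl0.pow 2
  have hDdiff : Tendsto (fun n => D n - D (n + 1)) atTop (𝓝 0) := by
    have h2 : Tendsto (fun n => D (n + 1)) atTop (𝓝 (l0 ^ 2)) :=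
      hDlim.comp (tendsto_add_atTop_nat 1)
    simpa using hDlim.sub h2
  -- residual estimates
  have hres1 : ∀ n, c * (1 - d) * ‖x n - t n‖ ^ 2 ≤ D n - D (n + 1) := by
    intro n
    simp only [hD]
    have h1 := hstep q0 hq0 n
    have h2 := hkey q0 hq0 n
    have ha1 := (halp n).1; have ha2 := (halp n).2
    have hl1 := hlam0 n; have hl2 := hlam2 n
    have hcoef : c * (1 - d) ≤ alp n * (1 - alp n) :=
      mul_le_mul ha1 (by linarith) (by linarith) (by linarith)
    have hnn : 0 ≤ (1 - alp n) * (lam n * (2 * α - lam n)) * ‖A (x n) - A q0‖ ^ 2 :=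
      mul_nonneg (mul_nonneg (by linarith)
        (le_of_lt (mul_pos hl1 (by linarith)))) (sq_nonneg _)
    have hm := mul_le_mul_of_nonneg_right hcoef (sq_nonneg (‖x n - t n‖))
    linarith
  have hres2 : ∀ n, (1 - d) * (a * (2 * α - b)) * ‖A (x n) - A q0‖ ^ 2 ≤ D n - D (n + 1) := by
    intro n
    simp only [hD]
    have h1 := hstep q0 hq0 n
    have h2 := hkey q0 hq0 n
    have ha1 := (halp n).1; have ha2 := (halp n).2
    have hl1 := (hlam n).1; have hl2 := (hlam n).2
    have hcoef : a * (2 * α - b) ≤ lam n * (2 * α - lam n) :=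
      mul_le_mul hl1 (by linarith) (by linarith) (by linarith)
    have hcoef2 : (1 - d) * (a * (2 * α - b)) ≤ (1 - alp n) * (lam n * (2 * α - lam n)) :=
      mul_le_mul (by linarith) hcoef
        (le_of_lt (mul_pos (by linarith) (by linarith))) (by linarith)
    have hnn : 0 ≤ alp n * (1 - alp n) * ‖x n - t n‖ ^ 2 :=
      mul_nonneg (mul_nonneg (by linarith) (by linarith)) (sq_nonneg _)
    have hm := mul_le_mul_of_nonneg_right hcoef2 (sq_nonneg (‖A (x n) - A q0‖))
    linarith
  have hxt : Tendsto (fun n => ‖x n - t n‖) atTop (𝓝 0) := by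
    have hK : (0:ℝ) < c * (1 - d) := mul_pos hc (by linarith)
    have hsq2 : Tendsto (fun n => ‖x n - t n‖ ^ 2) atTop (𝓝 0) := by
      refine squeeze_zero (g := fun n => (D n - D (n + 1)) / (c * (1 - d)))
        (fun n => sq_nonneg _) (fun n => ?_) ?_
      · exact (le_div_iff₀ hK).2 (by rw [mul_comm]; exact hres1 n)
      · simpa using hDdiff.div_const (c * (1 - d))
    have hfe : (fun n => ‖x n - t n‖) = fun n => Real.sqrt (‖x n - t n‖ ^ 2) := by
      funext n; rw [Real.sqrt_sq (norm_nonneg _)]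
    rw [hfe]
    have := (Real.continuous_sqrt.tendsto 0).comp hsq2
    simpa [Function.comp_def] using this
  have hAq : Tendsto (fun n => ‖A (x n) - A q0‖) atTop (𝓝 0) := by
    have hK : (0:ℝ) < (1 - d) * (a * (2 * α - b)) :=
      mul_pos (by linarith) (mul_pos ha (by linarith))
    have hsq2 : Tendsto (fun n => ‖A (x n) - A q0‖ ^ 2) atTop (𝓝 0) := by
      refine squeeze_zero (g := fun n => (D n - D (n + 1)) / ((1 - d) * (a * (2 * α - b))))
        (fun n => sq_nonneg _) (fun n => ?_) ?_
      · exact (le_div_iff₀ hK).2 (by rw [mul_comm]; exact hres2 n)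
      · simpa using hDdiff.div_const ((1 - d) * (a * (2 * α - b)))
    have hfe : (fun n => ‖A (x n) - A q0‖) = fun n => Real.sqrt (‖A (x n) - A q0‖ ^ 2) := by
      funext n; rw [Real.sqrt_sq (norm_nonneg _)]
    rw [hfe]
    have := (Real.continuous_sqrt.tendsto 0).comp hsq2
    simpa [Function.comp_def] using this
  -- bound for inner products against x n
  have hinnbd : ∀ (u : H) (n : ℕ), |⟪x n, u⟫| ≤ M * ‖u‖ := by
    intro u n
    calc |⟪x n, u⟫| ≤ ‖x n‖ * ‖u‖ := abs_real_inner_le_norm _ _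
      _ ≤ M * ‖u‖ := mul_le_mul_of_nonneg_right (hxbd n) (norm_nonneg _)
  -- the ultrafilter workhorse
  have main : ∀ 𝒱 : Ultrafilter ℕ, (↑𝒱 : Filter ℕ) ≤ atTop →
      ∃ z, z ∈ Ω ∧ ∀ u : H, Tendsto (fun n => ⟪x n, u⟫) ↑𝒱 (𝓝 ⟪z, u⟫) := by
    intro V hV
    -- existence of limits of inner products along V
    have hLim : ∀ u : H, ∃ r : ℝ, Tendsto (fun n => ⟪x n, u⟫) ↑V (𝓝 r) := by
      intro u
      have hbd : ∀ n, ⟪x n, u⟫ ∈ Set.Icc (-(M * ‖u‖)) (M * ‖u‖) := by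
        intro n
        have h := abs_le.1 (hinnbd u n)
        exact ⟨h.1, h.2⟩
      have hle : ↑(V.map fun n => ⟪x n, u⟫) ≤ 𝓟 (Set.Icc (-(M * ‖u‖)) (M * ‖u‖)) := by
        rw [Ultrafilter.coe_map]
        exact le_principal_iff.2 (Filter.mem_map.2 (Filter.univ_mem' hbd))
      obtain ⟨r, _, hmap⟩ := isCompact_Icc.ultrafilter_le_nhds _ hle
      rw [Ultrafilter.coe_map] at hmap
      exact ⟨r, hmap⟩
    choose L hL using hLim
    have hLadd : ∀ u v : H, L (u + v) = L u + L v := by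
      intro u v
      have h1 := (hL u).add (hL v)
      have he : (fun n => ⟪x n, u⟫ + ⟪x n, v⟫) = fun n => ⟪x n, u + v⟫ := by
        funext n; rw [inner_add_right]
      rw [he] at h1
      exact tendsto_nhds_unique (hL (u + v)) h1
    have hLsmul : ∀ (r : ℝ) (u : H), L (r • u) = r * L u := by
      intro r u
      have h1 := (hL u).const_mul r
      have he : (fun n => r * ⟪x n, u⟫) = fun n => ⟪x n, r • u⟫ := by
        funext n; rw [real_inner_smul_right]
      rw [he] at h1
      exact tendsto_nhds_unique (hL (r • u)) h1
    have hLbd : ∀ u : H, |L u| ≤ M * ‖u‖ := by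
      intro u
      exact le_of_tendsto (hL u).abs (Filter.univ_mem' fun n => hinnbd u n)
    let lin : H →ₗ[ℝ] ℝ :=
      { toFun := L, map_add' := hLadd, map_smul' := fun r u => by simpa using hLsmul r u }
    let F : H →L[ℝ] ℝ := LinearMap.mkContinuous lin M fun u => by
      simpa [Real.norm_eq_abs, lin] using hLbd u
    obtain ⟨z, hzinner⟩ : ∃ z : H, ∀ u : H, ⟪z, u⟫ = L u := by
      refine ⟨(InnerProductSpace.toDual ℝ H).symm F, fun u => ?_⟩
      have htd : InnerProductSpace.toDual ℝ H ((InnerProductSpace.toDual ℝ H).symm F) = F :=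
        (InnerProductSpace.toDual ℝ H).apply_symm_apply F
      have h2 : (InnerProductSpace.toDual ℝ H ((InnerProductSpace.toDual ℝ H).symm F)) u
          = ⟪(InnerProductSpace.toDual ℝ H).symm F, u⟫ := InnerProductSpace.toDual_apply_apply
      rw [htd] at h2
      have h3 : F u = L u := rfl
      rw [← h2, h3]
    have hweak : ∀ u : H, Tendsto (fun n => ⟪x n, u⟫) ↑V (𝓝 ⟪z, u⟫) := fun u =>
      (hzinner u) ▸ hL u
    -- z belongs to C
    have hzC : z ∈ C := by
      by_contra hzc
      obtain ⟨f, u0, hfu, hu0⟩ := geometric_hahn_banach_closed_point hCcv hCcl hzc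
      set v := (InnerProductSpace.toDual ℝ H).symm f with hvdef
      have htdv : InnerProductSpace.toDual ℝ H v = f :=
        (InnerProductSpace.toDual ℝ H).apply_symm_apply f
      have hfv : ∀ w : H, f w = ⟪v, w⟫ := by
        intro w
        rw [← htdv]
        exact InnerProductSpace.toDual_apply_apply
      have h2 : ∀ n, ⟪x n, v⟫ ≤ u0 := by
        intro n
        rw [real_inner_comm, ← hfv]
        exact le_of_lt (hfu _ (hxC n))
      have h3 : ⟪z, v⟫ ≤ u0 := le_of_tendsto (hweak v) (Filter.univ_mem' h2)
      have h4 : f z = ⟪v, z⟫ := hfv z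
      rw [real_inner_comm] at h3
      rw [h4] at hu0
      linarith
    -- A z = A q0
    have hAz : A z = A q0 := by
      have h1 : Tendsto (fun n => ⟪A (x n) - A z, x n - z⟫) ↑V (𝓝 0) := by
        have e : (fun n => ⟪A (x n) - A z, x n - z⟫)
            = fun n => ⟪A (x n) - A q0, x n - z⟫
              + (⟪x n, A q0 - A z⟫ - ⟪z, A q0 - A z⟫) := by
          funext n
          simp only [inner_sub_left, inner_sub_right]
          rw [real_inner_comm (x n) (A q0), real_inner_comm (x n) (A z),
            real_inner_comm z (A q0), real_inner_comm z (A z)]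
          ring
        have hb1 : Tendsto (fun n => ⟪A (x n) - A q0, x n - z⟫) atTop (𝓝 0) := by
          apply squeeze_zero_norm (a := fun n => ‖A (x n) - A q0‖ * (M + ‖z‖))
          · intro n
            calc ‖⟪A (x n) - A q0, x n - z⟫‖ ≤ ‖A (x n) - A q0‖ * ‖x n - z‖ :=
                  abs_real_inner_le_norm _ _
              _ ≤ ‖A (x n) - A q0‖ * (M + ‖z‖) := by
                  apply mul_le_mul_of_nonneg_left _ (norm_nonneg _)
                  calc ‖x n - z‖ ≤ ‖x n‖ + ‖z‖ := norm_sub_le _ _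
                    _ ≤ M + ‖z‖ := by linarith [hxbd n]
          · simpa using hAq.mul_const (M + ‖z‖)
        have hb2 : Tendsto (fun n => ⟪x n, A q0 - A z⟫ - ⟪z, A q0 - A z⟫) ↑V (𝓝 0) := by
          simpa using (hweak (A q0 - A z)).sub_const ⟪z, A q0 - A z⟫
        rw [e]
        simpa using (hb1.mono_left hV).add hb2
      have hnrm : Tendsto (fun n => ‖A (x n) - A z‖) atTop (𝓝 ‖A q0 - A z‖) := by
        have hs : Tendsto (fun n => ‖A (x n) - A z‖ - ‖A q0 - A z‖) atTop (𝓝 0) := by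
          apply squeeze_zero_norm (a := fun n => ‖A (x n) - A q0‖)
          · intro n
            have e2 : A (x n) - A z - (A q0 - A z) = A (x n) - A q0 := by abel
            calc ‖(‖A (x n) - A z‖ - ‖A q0 - A z‖)‖ ≤ ‖A (x n) - A z - (A q0 - A z)‖ :=
                abs_norm_sub_norm_le _ _
              _ = ‖A (x n) - A q0‖ := by rw [e2]
          · exact hAq
        simpa using hs.add_const ‖A q0 - A z‖
      have h2 : Tendsto (fun n => α * ‖A (x n) - A z‖ ^ 2) ↑V (𝓝 (α * ‖A q0 - A z‖ ^ 2)) :=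
        ((hnrm.pow 2).const_mul α).mono_left hV
      have hle : α * ‖A q0 - A z‖ ^ 2 ≤ 0 :=
        le_of_tendsto_of_tendsto' h2 h1 fun n => hA (x n) (hxC n) z hzC
      have hz9 : ‖A q0 - A z‖ ^ 2 = 0 := by nlinarith [sq_nonneg ‖A q0 - A z‖]
      have hz0 : ‖A q0 - A z‖ = 0 := pow_eq_zero_iff two_ne_zero |>.1 hz9
      have := sub_eq_zero.1 (norm_eq_zero.1 hz0)
      exact this.symm
    -- z solves the variational inequality
    have hVI : ∀ w ∈ C, 0 ≤ ⟪A z, w - z⟫ := by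
      intro w hw
      set K : ℝ := ‖w‖ + M with hK
      have hKbd : ∀ n, ‖w - t n‖ ≤ K := by
        intro n
        calc ‖w - t n‖ ≤ ‖w‖ + ‖t n‖ := norm_sub_le _ _
          _ ≤ K := by linarith [htbd n]
      have hK0 : 0 ≤ K := le_trans (norm_nonneg _) (hKbd 0)
      -- projection characterization at x n - lam n • A (x n)
      have hchar : ∀ n, ⟪x n - t n, w - t n⟫ - lam n * ⟪A (x n), w - t n⟫ ≤ 0 := by
        intro n
        have h := pchar (x n - lam n • A (x n)) w hw
        have e : x n - lam n • A (x n) - PC (x n - lam n • A (x n))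
            = (x n - t n) - lam n • A (x n) := by
          have : PC (x n - lam n • A (x n)) = t n := rfl
          rw [this]; abel
        rw [e, inner_sub_left, real_inner_smul_left] at h
        have e2 : (w - PC (x n - lam n • A (x n))) = w - t n := rfl
        rw [e2] at h
        linarith
      -- lower bound for ⟪A (x n), w - t n⟫
      have hlow : ∀ n, -((‖x n - t n‖ * K) / a) ≤ ⟪A (x n), w - t n⟫ := by
        intro n
        have hs : -(‖x n - t n‖ * K) ≤ ⟪x n - t n, w - t n⟫ := by
          have := abs_le.1 (le_trans (abs_real_inner_le_norm (x n - t n) (w - t n))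
            (mul_le_mul_of_nonneg_left (hKbd n) (norm_nonneg _)))
          exact this.1
        have hP := hchar n
        have hl1 := (hlam n).1
        have hln0 := hlam0 n
        rcases le_or_gt 0 (⟪A (x n), w - t n⟫) with hpos | hneg
        · have : -((‖x n - t n‖ * K) / a) ≤ 0 := by
            apply neg_nonpos.2
            exact div_nonneg (mul_nonneg (norm_nonneg _) hK0) (le_of_lt ha)
          linarith
        · have hml : lam n * ⟪A (x n), w - t n⟫ ≤ a * ⟪A (x n), w - t n⟫ :=
            mul_le_mul_of_nonpos_right hl1 (le_of_lt hneg)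
          have h2 : -(‖x n - t n‖ * K) ≤ a * ⟪A (x n), w - t n⟫ := by linarith
          rw [← neg_div, div_le_iff₀ ha]
          linarith [mul_comm a (⟪A (x n), w - t n⟫ : ℝ), h2]
      -- pass to the limit along V
      have hGlim : Tendsto (fun n => ⟪A z, w - t n⟫) ↑V (𝓝 ⟪A z, w - z⟫) := by
        have e : (fun n => ⟪A z, w - t n⟫)
            = fun n => (⟪A z, w⟫ - ⟪x n, A z⟫) + ⟪A z, x n - t n⟫ := by
          funext n
          simp only [inner_sub_right]
          rw [real_inner_comm (x n) (A z)]
          ring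
        rw [e]
        have hb1 : Tendsto (fun n => ⟪A z, w⟫ - ⟪x n, A z⟫) ↑V (𝓝 (⟪A z, w⟫ - ⟪z, A z⟫)) :=
          tendsto_const_nhds.sub (hweak (A z))
        have hb2 : Tendsto (fun n => ⟪A z, x n - t n⟫) atTop (𝓝 0) := by
          apply squeeze_zero_norm (a := fun n => ‖A z‖ * ‖x n - t n‖)
          · intro n; exact abs_real_inner_le_norm _ _
          · simpa using hxt.const_mul ‖A z‖
        have := hb1.add (hb2.mono_left hV)
        rw [inner_sub_right, real_inner_comm z (A z)]
        simpa using this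
      have hLo : Tendsto (fun n => -((‖x n - t n‖ * K) / a) - ‖A (x n) - A q0‖ * K) atTop (𝓝 0) := by
        have h1 : Tendsto (fun n => (‖x n - t n‖ * K) / a) atTop (𝓝 0) := by
          simpa using (hxt.mul_const K).div_const a
        have h2 : Tendsto (fun n => ‖A (x n) - A q0‖ * K) atTop (𝓝 0) := by
          simpa using hAq.mul_const K
        simpa using (h1.neg).sub h2
      have hcmp : ∀ n, -((‖x n - t n‖ * K) / a) - ‖A (x n) - A q0‖ * K ≤ ⟪A z, w - t n⟫ := by
        intro n
        have e : ⟪A z, w - t n⟫ = ⟪A (x n), w - t n⟫ - ⟪A (x n) - A z, w - t n⟫ := by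
          rw [inner_sub_left]; ring
        have habs : |⟪A (x n) - A z, w - t n⟫| ≤ ‖A (x n) - A q0‖ * K := by
          rw [hAz]
          exact le_trans (abs_real_inner_le_norm _ _)
            (mul_le_mul_of_nonneg_left (hKbd n) (norm_nonneg _))
        have h2 := (abs_le.1 habs).2
        have h3 := hlow n
        calc -((‖x n - t n‖ * K) / a) - ‖A (x n) - A q0‖ * K
            ≤ ⟪A (x n), w - t n⟫ - ⟪A (x n) - A z, w - t n⟫ := sub_le_sub h3 h2
          _ = ⟪A z, w - t n⟫ := e.symm
      exact le_of_tendsto_of_tendsto' (hLo.mono_left hV) hGlim hcmp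
    refine ⟨z, ?_, hweak⟩
    rw [hΩ]
    exact ⟨hzC, fun w hw => hVI w hw⟩
  -- Opial-type uniqueness of weak subsequential limits
  have key : ∀ (V : Ultrafilter ℕ) (p q : H) (lp lq : ℝ), (↑V : Filter ℕ) ≤ atTop →
      (∀ u : H, Tendsto (fun n => ⟪x n, u⟫) ↑V (𝓝 ⟪p, u⟫)) →
      Tendsto (fun n => ‖x n - p‖) atTop (𝓝 lp) →
      Tendsto (fun n => ‖x n - q‖) atTop (𝓝 lq) →
      lq ^ 2 = lp ^ 2 + 2 * 0 + ‖p - q‖ ^ 2 := by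
    intro V p q lp lq hV hwp hlp hlq
    have hid : (fun n => ‖x n - q‖ ^ 2)
        = fun n => ‖x n - p‖ ^ 2 + 2 * ⟪x n - p, p - q⟫ + ‖p - q‖ ^ 2 :=
      funext fun n => my_norm_sub_sq p q (x n)
    have h1 : Tendsto (fun n => ‖x n - q‖ ^ 2) ↑V (𝓝 (lq ^ 2)) := (hlq.pow 2).mono_left hV
    have ha' : Tendsto (fun n => ⟪x n - p, p - q⟫) ↑V (𝓝 0) := by
      have e : (fun n => ⟪x n - p, p - q⟫) = fun n => ⟪x n, p - q⟫ - ⟪p, p - q⟫ := by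
        funext n; rw [inner_sub_left]
      rw [e]
      simpa using (hwp (p - q)).sub_const ⟪p, p - q⟫
    have h2 : Tendsto (fun n => ‖x n - p‖ ^ 2 + 2 * ⟪x n - p, p - q⟫ + ‖p - q‖ ^ 2) ↑V
        (𝓝 (lp ^ 2 + 2 * 0 + ‖p - q‖ ^ 2)) :=
      (((hlp.pow 2).mono_left hV).add (ha'.const_mul 2)).add tendsto_const_nhds
    rw [hid] at h1
    exact tendsto_nhds_unique h1 h2
  have uniq : ∀ (V1 V2 : Ultrafilter ℕ), (↑V1 : Filter ℕ) ≤ atTop → (↑V2 : Filter ℕ) ≤ atTop →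
      ∀ z1, z1 ∈ Ω → ∀ z2, z2 ∈ Ω →
      (∀ u : H, Tendsto (fun n => ⟪x n, u⟫) ↑V1 (𝓝 ⟪z1, u⟫)) →
      (∀ u : H, Tendsto (fun n => ⟪x n, u⟫) ↑V2 (𝓝 ⟪z2, u⟫)) → z1 = z2 := by
    intro V1 V2 hV1 hV2 z1 hz1 z2 hz2 hw1 hw2
    obtain ⟨l1, hl10, hl1⟩ := hnormlim z1 hz1
    obtain ⟨l2, hl20, hl2⟩ := hnormlim z2 hz2
    have h12 := key V1 z1 z2 l1 l2 hV1 hw1 hl1 hl2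
    have h21 := key V2 z2 z1 l2 l1 hV2 hw2 hl2 hl1
    have hnr : ‖z2 - z1‖ = ‖z1 - z2‖ := norm_sub_rev _ _
    rw [hnr] at h21
    have h0 : ‖z1 - z2‖ ^ 2 = 0 := by linarith
    have := pow_eq_zero_iff two_ne_zero |>.1 h0
    exact sub_eq_zero.1 (norm_eq_zero.1 this)
  -- the weak limit
  obtain ⟨p, hpΩ, hpweak⟩ := main (Ultrafilter.of atTop) (Ultrafilter.of_le _)
  have hweakconv : ∀ u : H, Tendsto (fun n => ⟪x n, u⟫) atTop (𝓝 ⟪p, u⟫) := by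
    intro u
    rw [tendsto_iff_ultrafilter]
    intro V hV
    obtain ⟨z, hzΩ, hzweak⟩ := main V hV
    have hpz := uniq (Ultrafilter.of atTop) V (Ultrafilter.of_le _) hV p hpΩ z hzΩ hpweak hzweak
    rw [hpz]
    exact hzweak u
  -- Minty characterization and convexity of Ω
  have hLip : ∀ u ∈ C, ∀ v ∈ C, α * ‖A u - A v‖ ≤ ‖u - v‖ := by
    intro u hu v hv
    have h := hA u hu v hv
    have hcs := real_inner_le_norm (A u - A v) (u - v)
    rcases eq_or_lt_of_le (norm_nonneg (A u - A v)) with h0 | h0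
    · rw [← h0, mul_zero]; exact norm_nonneg _
    · nlinarith
  have hM1 : ∀ q ∈ Ω, ∀ w ∈ C, 0 ≤ ⟪A w, w - q⟫ := by
    intro q hq w hw
    have h := hA w hw q (hΩC q hq)
    have hvi := hΩvi q hq w hw
    have e : ⟪A w, w - q⟫ = ⟪A w - A q, w - q⟫ + ⟪A q, w - q⟫ := by
      rw [inner_sub_left]; ring
    nlinarith [sq_nonneg ‖A w - A q‖]
  have hM2 : ∀ z ∈ C, (∀ w ∈ C, 0 ≤ ⟪A w, w - z⟫) → z ∈ Ω := by
    intro z hzC hmin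
    rw [hΩ]
    refine ⟨hzC, fun w hw => ?_⟩
    have hwz : ∀ k : ℕ, (1 / ((k:ℝ) + 1)) • w + (1 - 1 / ((k:ℝ) + 1)) • z ∈ C := by
      intro k
      have h1 : (0:ℝ) < 1 / ((k:ℝ) + 1) := by positivity
      have h2 : 1 / ((k:ℝ) + 1) ≤ 1 := by
        rw [div_le_one (by positivity)]
        simp [Nat.cast_nonneg]
      exact hCcv hw hzC (le_of_lt h1) (by linarith) (by ring)
    have hstepk : ∀ k : ℕ, -(1 / ((k:ℝ) + 1) * ‖w - z‖ ^ 2 / α) ≤ ⟪A z, w - z⟫ := by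
      intro k
      set s : ℝ := 1 / ((k:ℝ) + 1) with hs
      have hspos : 0 < s := by positivity
      have hsle : s ≤ 1 := by
        rw [hs, div_le_one (by positivity)]; simp [Nat.cast_nonneg]
      set ws : H := s • w + (1 - s) • z with hws
      have hwsC : ws ∈ C := hwz k
      have hwsz : ws - z = s • (w - z) := by rw [hws]; module
      have h1 : 0 ≤ s * ⟪A ws, w - z⟫ := by
        have := hmin ws hwsC
        rwa [hwsz, real_inner_smul_right] at this
      have hP : 0 ≤ ⟪A ws, w - z⟫ := by nlinarith
      have hlip := hLip ws hwsC z hzC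
      rw [hwsz] at hlip
      have hnorm : ‖s • (w - z)‖ = s * ‖w - z‖ := by
        rw [norm_smul, Real.norm_eq_abs, abs_of_pos hspos]
      rw [hnorm] at hlip
      have habs : |⟪A ws - A z, w - z⟫| ≤ ‖A ws - A z‖ * ‖w - z‖ :=
        abs_real_inner_le_norm _ _
      have h2 := (abs_le.1 habs).2
      have e : ⟪A z, w - z⟫ = ⟪A ws, w - z⟫ - ⟪A ws - A z, w - z⟫ := by
        rw [inner_sub_left]; ring
      have h3 : ‖A ws - A z‖ * ‖w - z‖ ≤ s * ‖w - z‖ ^ 2 / α := by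
        rw [le_div_iff₀ hα]
        nlinarith [norm_nonneg (w - z), mul_le_mul_of_nonneg_right hlip (norm_nonneg (w - z))]
      linarith [e, h2, h3, hP]
    have hlim : Tendsto (fun k : ℕ => -(1 / ((k:ℝ) + 1) * ‖w - z‖ ^ 2 / α)) atTop (𝓝 0) := by
      have h1 := tendsto_one_div_add_atTop_nhds_zero_nat (𝕜 := ℝ)
      simpa using ((h1.mul_const (‖w - z‖ ^ 2)).div_const α).neg
    have := le_of_tendsto' (f := fun k : ℕ => -(1 / ((k:ℝ) + 1) * ‖w - z‖ ^ 2 / α))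
      hlim hstepk
    exact this
  have hΩcv : Convex ℝ Ω := by
    intro z1 hz1 z2 hz2 θ σ hθ hσ hsum
    refine hM2 _ (hCcv (hΩC _ hz1) (hΩC _ hz2) hθ hσ hsum) ?_
    intro w hw
    have e : w - (θ • z1 + σ • z2) = θ • (w - z1) + σ • (w - z2) := by
      have hw1 : (θ + σ) • w = w := by rw [hsum, one_smul]
      calc w - (θ • z1 + σ • z2) = (θ + σ) • w - (θ • z1 + σ • z2) := by rw [hw1]
        _ = θ • (w - z1) + σ • (w - z2) := by module
    rw [e, inner_add_right, real_inner_smul_right, real_inner_smul_right]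
    exact add_nonneg (mul_nonneg hθ (hM1 z1 hz1 w hw)) (mul_nonneg hσ (hM1 z2 hz2 w hw))
  -- strong convergence of the projections
  have pΩchar := my_proj_char hΩcv PΩ hPΩ
  have hunΩ : ∀ n, PΩ (x n) ∈ Ω := fun n => (hPΩ (x n)).1
  set s : ℕ → ℝ := fun n => ‖x n - PΩ (x n)‖ with hsdef
  have hs0 : ∀ n, 0 ≤ s n := fun n => norm_nonneg _
  have hsmono : ∀ {n m : ℕ}, n ≤ m → s m ≤ s n := by
    intro n m hnm
    calc s m ≤ ‖x m - PΩ (x n)‖ := (hPΩ (x m)).2 _ (hunΩ n)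
      _ ≤ ‖x n - PΩ (x n)‖ := hdec _ (hunΩ n) hnm
  have hsbd : BddBelow (Set.range s) := ⟨0, fun r ⟨n, hn⟩ => hn ▸ hs0 n⟩
  set sinf : ℝ := ⨅ n, s n with hsinf
  have hslim : Tendsto s atTop (𝓝 sinf) :=
    tendsto_atTop_ciInf (fun n m hnm => hsmono hnm) hsbd
  have hsinfle : ∀ n, sinf ≤ s n := fun n => ciInf_le hsbd n
  have hsinf0 : 0 ≤ sinf := le_ciInf hs0
  have hcb : ∀ {n m : ℕ}, n ≤ m → ‖PΩ (x m) - PΩ (x n)‖ ^ 2 ≤ s n ^ 2 - s m ^ 2 := by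
    intro n m hnm
    have hid := my_norm_sub_sq (PΩ (x m)) (PΩ (x n)) (x m)
    have hchar := pΩchar (x m) (PΩ (x n)) (hunΩ n)
    have hneg : 0 ≤ ⟪x m - PΩ (x m), PΩ (x m) - PΩ (x n)⟫ := by
      have e : PΩ (x m) - PΩ (x n) = -(PΩ (x n) - PΩ (x m)) := by abel
      rw [e, inner_neg_right]
      linarith
    have hle1 : ‖x m - PΩ (x n)‖ ≤ s n := hdec _ (hunΩ n) hnm
    have hle2 : ‖x m - PΩ (x n)‖ ^ 2 ≤ s n ^ 2 :=
      pow_le_pow_left₀ (norm_nonneg _) hle1 2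
    have hsm : s m ^ 2 = ‖x m - PΩ (x m)‖ ^ 2 := rfl
    linarith [hid, hle2]
  have hcauchy : CauchySeq fun n => PΩ (x n) := by
    apply cauchySeq_of_le_tendsto_0 (fun N => Real.sqrt (s N ^ 2 - sinf ^ 2))
    · intro n m N hn hm
      have hgen : ∀ {i j : ℕ}, i ≤ j → N ≤ i → dist (PΩ (x j)) (PΩ (x i)) ≤
          Real.sqrt (s N ^ 2 - sinf ^ 2) := by
        intro i j hij hNi
        have h1 := hcb hij
        have h2 : s i ^ 2 ≤ s N ^ 2 := pow_le_pow_left₀ (hs0 i) (hsmono hNi) 2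
        have h3 : sinf ^ 2 ≤ s j ^ 2 := pow_le_pow_left₀ hsinf0 (hsinfle j) 2
        have h4 : ‖PΩ (x j) - PΩ (x i)‖ ^ 2 ≤ s N ^ 2 - sinf ^ 2 := by linarith
        rw [dist_eq_norm]
        calc ‖PΩ (x j) - PΩ (x i)‖ = Real.sqrt (‖PΩ (x j) - PΩ (x i)‖ ^ 2) :=
            (Real.sqrt_sq (norm_nonneg _)).symm
          _ ≤ Real.sqrt (s N ^ 2 - sinf ^ 2) := Real.sqrt_le_sqrt h4
      rcases le_total n m with h | h
      · rw [dist_comm]; exact hgen h hn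
      · exact hgen h hm
    · have h1 : Tendsto (fun N => s N ^ 2 - sinf ^ 2) atTop (𝓝 0) := by
        have h0 := (hslim.pow 2).sub_const (sinf ^ 2)
        rwa [sub_self] at h0
      have := (Real.continuous_sqrt.tendsto 0).comp h1
      simpa [Function.comp_def] using this
  obtain ⟨uinf, huinf⟩ := cauchySeq_tendsto_of_complete hcauchy
  -- identify the strong limit of the projections with p
  have hpu : p = uinf := by
    have hchar2 : ∀ n, ⟪x n - PΩ (x n), p - PΩ (x n)⟫ ≤ 0 := fun n =>
      pΩchar (x n) p hpΩ
    have hlim2 : Tendsto (fun n => ⟪x n - PΩ (x n), p - PΩ (x n)⟫) atTop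
        (𝓝 ⟪p - uinf, p - uinf⟫) := by
      have e : (fun n => ⟪x n - PΩ (x n), p - PΩ (x n)⟫)
          = fun n => (⟪x n, p - uinf⟫ + ⟪x n, uinf - PΩ (x n)⟫)
            - ⟪PΩ (x n), p - PΩ (x n)⟫ := by
        funext n
        simp only [inner_sub_left, inner_sub_right, inner_add_right]
        ring
      rw [e]
      have hb1 : Tendsto (fun n => ⟪x n, p - uinf⟫) atTop (𝓝 ⟪p, p - uinf⟫) :=
        hweakconv (p - uinf)
      have hb2 : Tendsto (fun n => ⟪x n, uinf - PΩ (x n)⟫) atTop (𝓝 0) := by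
        apply squeeze_zero_norm (a := fun n => M * ‖uinf - PΩ (x n)‖)
        · intro n; exact hinnbd _ n
        · have hnn : Tendsto (fun n => ‖uinf - PΩ (x n)‖) atTop (𝓝 0) := by
            have := (tendsto_const_nhds (x := uinf) (f := atTop)).sub huinf
            simpa using this.norm
          simpa using hnn.const_mul M
      have hb3 : Tendsto (fun n => ⟪PΩ (x n), p - PΩ (x n)⟫) atTop
          (𝓝 ⟪uinf, p - uinf⟫) :=
        Filter.Tendsto.inner huinf (tendsto_const_nhds.sub huinf)
      have := (hb1.add hb2).sub hb3
      have e2 : ⟪p, p - uinf⟫ + 0 - ⟪uinf, p - uinf⟫ = ⟪p - uinf, p - uinf⟫ := by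
        rw [inner_sub_left]; ring
      rwa [e2] at this
    have hle : ⟪p - uinf, p - uinf⟫ ≤ 0 :=
      le_of_tendsto hlim2 (Filter.univ_mem' hchar2)
    exact sub_eq_zero.1 (real_inner_self_nonpos.1 hle)
  exact ⟨p, hpΩ, hweakconv, by rw [hpu]; exact huinf⟩
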